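/- Flow lemma: for each ℓ ∈ ℕ, let p_ℓ be the uniform probability distribution on the box Λ_ℓ = [0,ℓ−1]^d ∩ ℤ^d and set q_ℓ = p_ℓ * p_ℓ (convolution), a probability distribution on Λ_{2ℓ−1}. Then there exist a constant C_d > 0 depending only on d and, for each ℓ, a flow Φ^ℓ on the nearest-neighbor graph of Λ_{2ℓ−1} connecting the Dirac measure δ₀ and q_ℓ — i.e. a function Φ^ℓ(x,y) defined on ordered nearest-neighbor pairs x ∼ y of Λ_{2ℓ−1} with Φ^ℓ(x,y) = −Φ^ℓ(y,x) and Σ_{z∼x} Φ^ℓ(x,z) = δ₀(x) − q_ℓ(x) for all x ∈ Λ_{2ℓ−1} — whose cost ‖Φ^ℓ‖² := (1/2) Σ_{x∼y} Φ^ℓ(x,y)² satisfies ‖Φ^ℓ‖² ≤ C_d g_d(ℓ), where g_d(ℓ) = ℓ if d = 1, g_d(ℓ) = log ℓ if d = 2, and g_d(ℓ) = 1 if d ≥ 3. -/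

import Mathlib

open Finset

/-- The box `Λ_ℓ = [0, ℓ-1]^d ∩ ℤ^d`. -/
noncomputable def boxZ (d ℓ : ℕ) : Finset (Fin d → ℤ) :=
  Fintype.piFinset fun _ => Finset.Icc 0 ((ℓ : ℤ) - 1)

/-- The `j`-th unit vector `e_j ∈ ℤ^d`. -/
def eZ (d : ℕ) (j : Fin d) : Fin d → ℤ := fun k => if k = j then 1 else 0

/-- The uniform probability distribution `p_ℓ` on `Λ_ℓ`. -/
noncomputable def punif (d ℓ : ℕ) (x : Fin d → ℤ) : ℝ :=
  if x ∈ boxZ d ℓ then ((ℓ : ℝ) ^ d)⁻¹ else 0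

/-- The convolution `q_ℓ = p_ℓ * p_ℓ`. -/
noncomputable def qconv (d ℓ : ℕ) (x : Fin d → ℤ) : ℝ :=
  ∑ y ∈ boxZ d ℓ, punif d ℓ y * punif d ℓ (x - y)

/-- `Φ` is a flow on the nearest-neighbour graph of `Λ_b` connecting `p` and `q`:
it is antisymmetric, supported on ordered nearest-neighbour pairs of `Λ_b`, and
its divergence at every vertex of `Λ_b` equals `p - q`. -/
def IsFlow (d b : ℕ) (Φ : (Fin d → ℤ) → (Fin d → ℤ) → ℝ)
    (p q : (Fin d → ℤ) → ℝ) : Prop :=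
  (∀ x y, Φ x y = - Φ y x) ∧
  (∀ x y, Φ x y ≠ 0 →
    x ∈ boxZ d b ∧ y ∈ boxZ d b ∧ ∃ j : Fin d, y = x + eZ d j ∨ y = x - eZ d j) ∧
  (∀ x ∈ boxZ d b, (∑ j : Fin d, (Φ x (x + eZ d j) + Φ x (x - eZ d j))) = p x - q x)

/-- The cost `‖Φ‖² = (1/2) Σ_{x∼y} Φ(x,y)²` of a flow on `Λ_b`. -/
noncomputable def flowCost (d b : ℕ) (Φ : (Fin d → ℤ) → (Fin d → ℤ) → ℝ) : ℝ :=
  (1/2) * ∑ x ∈ boxZ d b, ∑ j : Fin d, (Φ x (x + eZ d j) ^ 2 + Φ x (x - eZ d j) ^ 2)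

/-- `g_d(ℓ)`: `ℓ` if `d = 1`, `log ℓ` if `d = 2`, and `1` if `d ≥ 3`. -/
noncomputable def gScale (d ℓ : ℕ) : ℝ :=
  if d = 1 then (ℓ : ℝ) else if d = 2 then Real.log ℓ else 1

namespace FlowAux

/-- generic: nonneg function supported in `Icc 0 B` with total mass `m`: extended cdf. -/
lemma sum_Icc_of_supp {f : ℤ → ℝ} {B x : ℤ} (hsupp : ∀ a, f a ≠ 0 → a ∈ Finset.Icc 0 B)
    (hx : B ≤ x) : ∑ a ∈ Finset.Icc 0 x, f a = ∑ a ∈ Finset.Icc 0 B, f a := by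
  symm
  apply Finset.sum_subset (Finset.Icc_subset_Icc_right hx)
  intro a _ ha
  by_contra h
  exact ha (hsupp a h)

lemma cdf_le_total {f : ℤ → ℝ} {B x : ℤ} (hf : ∀ a, 0 ≤ f a)
    (hsupp : ∀ a, f a ≠ 0 → a ∈ Finset.Icc 0 B) :
    ∑ a ∈ Finset.Icc 0 x, f a ≤ ∑ a ∈ Finset.Icc 0 B, f a := by
  rcases le_total x B with h | h
  · exact Finset.sum_le_sum_of_subset_of_nonneg (Finset.Icc_subset_Icc_right h)
      (fun a _ _ => hf a)
  · exact le_of_eq (sum_Icc_of_supp hsupp h)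

noncomputable def u (M : ℕ) (a : ℤ) : ℝ :=
  if a ∈ Finset.Icc (0:ℤ) ((M:ℤ) - 1) then (M:ℝ)⁻¹ else 0

lemma u_nonneg (M : ℕ) (a : ℤ) : 0 ≤ u M a := by
  unfold u; split <;> positivity

lemma u_le (M : ℕ) (a : ℤ) : u M a ≤ (M:ℝ)⁻¹ := by
  unfold u; split
  · exact le_rfl
  · positivity

lemma u_supp {M : ℕ} {a : ℤ} (h : u M a ≠ 0) : a ∈ Finset.Icc (0:ℤ) ((M:ℤ) - 1) := by
  by_contra hc; exact h (by simp [u, hc])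

lemma u_sum (M : ℕ) (hM : 1 ≤ M) : ∑ a ∈ Finset.Icc (0:ℤ) ((M:ℤ) - 1), u M a = 1 := by
  have : ∀ a ∈ Finset.Icc (0:ℤ) ((M:ℤ) - 1), u M a = (M:ℝ)⁻¹ := by
    intro a ha; simp [u, ha]
  rw [Finset.sum_congr rfl this, Finset.sum_const]
  have hcard : (Finset.Icc (0:ℤ) ((M:ℤ) - 1)).card = M := by
    rw [Int.card_Icc]
    omega
  rw [hcard]
  have : (M:ℝ) ≠ 0 := by positivity
  rw [nsmul_eq_mul]; field_simp

noncomputable def tri (ℓ : ℕ) (a : ℤ) : ℝ :=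
  ∑ b ∈ Finset.Icc (0:ℤ) ((ℓ:ℤ) - 1), u ℓ b * u ℓ (a - b)

lemma tri_nonneg (ℓ : ℕ) (a : ℤ) : 0 ≤ tri ℓ a :=
  Finset.sum_nonneg fun b _ => mul_nonneg (u_nonneg _ _) (u_nonneg _ _)

lemma tri_le (ℓ : ℕ) (hℓ : 1 ≤ ℓ) (a : ℤ) : tri ℓ a ≤ (ℓ:ℝ)⁻¹ := by
  calc tri ℓ a ≤ ∑ b ∈ Finset.Icc (0:ℤ) ((ℓ:ℤ) - 1), u ℓ b * (ℓ:ℝ)⁻¹ := by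
        apply Finset.sum_le_sum
        intro b _
        exact mul_le_mul_of_nonneg_left (u_le _ _) (u_nonneg _ _)
    _ = (ℓ:ℝ)⁻¹ := by
        rw [← Finset.sum_mul, u_sum ℓ hℓ, one_mul]

lemma tri_supp {ℓ : ℕ} {a : ℤ} (h : tri ℓ a ≠ 0) :
    a ∈ Finset.Icc (0:ℤ) (2*(ℓ:ℤ) - 2) := by
  obtain ⟨b, hb, hne⟩ := Finset.exists_ne_zero_of_sum_ne_zero h
  have h1 := u_supp (left_ne_zero_of_mul hne)
  have h2 := u_supp (right_ne_zero_of_mul hne)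
  simp only [Finset.mem_Icc] at *
  omega

lemma tri_sum (ℓ : ℕ) (hℓ : 1 ≤ ℓ) :
    ∑ a ∈ Finset.Icc (0:ℤ) (2*(ℓ:ℤ) - 2), tri ℓ a = 1 := by
  unfold tri
  rw [Finset.sum_comm]
  have key : ∀ b ∈ Finset.Icc (0:ℤ) ((ℓ:ℤ) - 1),
      ∑ a ∈ Finset.Icc (0:ℤ) (2*(ℓ:ℤ) - 2), u ℓ b * u ℓ (a - b) = u ℓ b := by
    intro b hb
    rw [← Finset.mul_sum]
    have : ∑ a ∈ Finset.Icc (0:ℤ) (2*(ℓ:ℤ) - 2), u ℓ (a - b)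
        = ∑ c ∈ Finset.Icc (0:ℤ) ((ℓ:ℤ) - 1), u ℓ c := by
      rw [show Finset.Icc (0:ℤ) (2*(ℓ:ℤ) - 2) = (Finset.Icc (-b) (2*(ℓ:ℤ) - 2 - b)).map
          (addRightEmbedding b) from ?_]
      · rw [Finset.sum_map]
        simp only [addRightEmbedding_apply, add_sub_cancel_right]
        simp only [Finset.mem_Icc] at hb
        symm
        apply Finset.sum_subset
        · apply Finset.Icc_subset_Icc <;> omega
        · intro c _ hc
          by_contra h
          have := u_supp h
          simp only [Finset.mem_Icc] at *
          omega
      · rw [Finset.map_add_right_Icc]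
        congr 1 <;> ring
    rw [this, u_sum ℓ hℓ, mul_one]
  rw [Finset.sum_congr rfl key, u_sum ℓ hℓ]

/-! ### Stage measures -/

noncomputable def nu (ℓ n k : ℕ) : ℤ → ℝ := if k ≤ n then u (2^k) else tri ℓ

section Stage

variable {ℓ n : ℕ} (hℓ : 1 ≤ ℓ) (hn1 : 2^n ≤ ℓ) (hn2 : ℓ < 2^(n+1))

lemma nu_nonneg (k : ℕ) (a : ℤ) : 0 ≤ nu ℓ n k a := by
  unfold nu; split
  · exact u_nonneg _ _
  · exact tri_nonneg _ _

include hℓ hn1 in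
lemma nu_le {k : ℕ} (hk : k ≤ n + 1) (a : ℤ) : nu ℓ n k a ≤ 2 * ((2:ℝ)^k)⁻¹ := by
  unfold nu; split
  · calc u (2^k) a ≤ ((2^k : ℕ):ℝ)⁻¹ := u_le _ _
      _ ≤ 2 * ((2:ℝ)^k)⁻¹ := by
          push_cast
          nlinarith [inv_nonneg.mpr (pow_nonneg (by norm_num : (0:ℝ) ≤ 2) k)]
  · have hkn : k = n + 1 := by omega
    subst hkn
    calc tri ℓ a ≤ (ℓ:ℝ)⁻¹ := tri_le ℓ hℓ a
      _ ≤ ((2^n : ℕ):ℝ)⁻¹ := by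
          apply inv_anti₀
          · positivity
          · exact_mod_cast hn1
      _ = 2 * ((2:ℝ)^(n+1))⁻¹ := by
          push_cast
          rw [pow_succ]
          field_simp
    
include hℓ hn1 in
lemma nu_supp_box {k : ℕ} (hk : k ≤ n + 1) {a : ℤ} (h : nu ℓ n k a ≠ 0) :
    a ∈ Finset.Icc (0:ℤ) (2*(ℓ:ℤ) - 2) := by
  unfold nu at h; split at h
  · have := u_supp h
    simp only [Finset.mem_Icc] at *
    have h2 : (2:ℤ)^k ≤ (2:ℤ)^n := by
      apply pow_le_pow_right₀ <;> omega
    have h3 : (2:ℤ)^n ≤ (ℓ:ℤ) := by exact_mod_cast hn1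
    push_cast at this ⊢
    omega
  · exact tri_supp h

include hn2 in
lemma nu_supp_small {k : ℕ} (hk : k ≤ n + 1) {a : ℤ} (h : nu ℓ n k a ≠ 0) :
    a ∈ Finset.Icc (0:ℤ) ((2:ℤ)^(k+1) - 2) := by
  unfold nu at h; split at h
  · have := u_supp h
    simp only [Finset.mem_Icc] at *
    have h1 : (1:ℤ) ≤ (2:ℤ)^k := one_le_pow₀ (by norm_num)
    push_cast at this
    constructor
    · omega
    · have : (a:ℤ) ≤ (2:ℤ)^k - 1 := by exact_mod_cast this.2
      have hp : (2:ℤ)^(k+1) = 2 * 2^k := by ring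
      omega
  · have hkn : k = n + 1 := by omega
    subst hkn
    have := tri_supp h
    simp only [Finset.mem_Icc] at *
    have : (ℓ:ℤ) < (2:ℤ)^(n+1) := by exact_mod_cast hn2
    have hp : (2:ℤ)^(n+1+1) = 2 * 2^(n+1) := by ring
    omega

include hℓ hn1 in
lemma nu_sum (k : ℕ) (hk : k ≤ n + 1) :
    ∑ a ∈ Finset.Icc (0:ℤ) (2*(ℓ:ℤ) - 2), nu ℓ n k a = 1 := by
  unfold nu; split
  · rw [sum_Icc_of_supp (fun a ha => u_supp ha)]
    · exact u_sum _ (Nat.one_le_two_pow)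
    · have h2 : (2:ℤ)^k ≤ (2:ℤ)^n := by apply pow_le_pow_right₀ <;> omega
      have h3 : (2:ℤ)^n ≤ (ℓ:ℤ) := by exact_mod_cast hn1
      push_cast
      omega
  · exact tri_sum ℓ hℓ

lemma nu_zero (a : ℤ) : nu ℓ n 0 a = if a = 0 then 1 else 0 := by
  unfold nu
  unfold u
  simp only [Nat.zero_le, if_true, pow_zero, Nat.cast_one, Finset.mem_Icc]
  norm_num
  split_ifs with h1 h2 h3 <;> first | rfl | omega

lemma nu_neg {k : ℕ} {x : ℤ} (hx : x < 0) : nu ℓ n k x = 0 := by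
  unfold nu; split
  · by_contra h
    have := u_supp h
    simp only [Finset.mem_Icc] at this
    omega
  · apply Finset.sum_eq_zero
    intro b hb
    rcases eq_or_ne (u ℓ b) 0 with h | h
    · rw [h, zero_mul]
    · have := u_supp h
      simp only [Finset.mem_Icc] at this
      have : u ℓ (x - b) = 0 := by
        by_contra h2
        have := u_supp h2
        simp only [Finset.mem_Icc] at this
        omega
      rw [this, mul_zero]

include hℓ hn1 in
lemma nu_cdf_le_one {k : ℕ} (hk : k ≤ n + 1) (x : ℤ) :
    ∑ a ∈ Finset.Icc (0:ℤ) x, nu ℓ n k a ≤ 1 := by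
  calc ∑ a ∈ Finset.Icc (0:ℤ) x, nu ℓ n k a
      ≤ ∑ a ∈ Finset.Icc (0:ℤ) (2*(ℓ:ℤ)-2), nu ℓ n k a :=
        cdf_le_total (nu_nonneg k) (fun a ha => nu_supp_box hℓ hn1 hk ha)
    _ = 1 := nu_sum hℓ hn1 k hk

include hℓ hn1 hn2 in
lemma nu_sum_small {k : ℕ} (hk : k ≤ n + 1) :
    ∑ a ∈ Finset.Icc (0:ℤ) ((2:ℤ)^(k+1) - 2), nu ℓ n k a = 1 := by
  set S : ℤ := (2:ℤ)^(k+1) - 2 with hS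
  set T : ℤ := 2*(ℓ:ℤ) - 2 with hT
  have h1 : ∑ a ∈ Finset.Icc (0:ℤ) (max S T), nu ℓ n k a
      = ∑ a ∈ Finset.Icc (0:ℤ) S, nu ℓ n k a :=
    sum_Icc_of_supp (fun a ha => nu_supp_small hn2 hk ha) (le_max_left _ _)
  have h2 : ∑ a ∈ Finset.Icc (0:ℤ) (max S T), nu ℓ n k a
      = ∑ a ∈ Finset.Icc (0:ℤ) T, nu ℓ n k a :=
    sum_Icc_of_supp (fun a ha => nu_supp_box hℓ hn1 hk ha) (le_max_right _ _)
  rw [← h1, h2]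
  exact nu_sum hℓ hn1 k hk

/-! ### The 1D stage flows -/

noncomputable def G (ℓ n : ℕ) (k : ℕ) (x : ℤ) : ℝ :=
  ∑ a ∈ Finset.Icc (0:ℤ) x, (nu ℓ n k a - nu ℓ n (k+1) a)

include hℓ hn1 in
lemma G_abs_le {k : ℕ} (hk : k ≤ n) (x : ℤ) : |G ℓ n k x| ≤ 1 := by
  unfold G
  rw [Finset.sum_sub_distrib]
  have h1 := nu_cdf_le_one hℓ hn1 (le_trans hk (Nat.le_succ n)) x
  have h2 := nu_cdf_le_one hℓ hn1 (Nat.succ_le_succ hk) x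
  have h3 : (0:ℝ) ≤ ∑ a ∈ Finset.Icc (0:ℤ) x, nu ℓ n k a :=
    Finset.sum_nonneg fun a _ => nu_nonneg k a
  have h4 : (0:ℝ) ≤ ∑ a ∈ Finset.Icc (0:ℤ) x, nu ℓ n (k+1) a :=
    Finset.sum_nonneg fun a _ => nu_nonneg (k+1) a
  rw [abs_le]
  constructor <;> linarith

lemma G_zero_left {k : ℕ} {x : ℤ} (hx : x < 0) : G ℓ n k x = 0 := by
  unfold G
  rw [Finset.Icc_eq_empty (by omega), Finset.sum_empty]

include hℓ hn1 in
lemma G_zero_right {k : ℕ} (hk : k ≤ n) {x : ℤ} (hx : 2*(ℓ:ℤ) - 2 ≤ x) :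
    G ℓ n k x = 0 := by
  unfold G
  rw [Finset.sum_sub_distrib]
  rw [sum_Icc_of_supp (fun a ha => nu_supp_box hℓ hn1 (le_trans hk (Nat.le_succ n)) ha) hx]
  rw [sum_Icc_of_supp (fun a ha => nu_supp_box hℓ hn1 (Nat.succ_le_succ hk) ha) hx]
  rw [nu_sum hℓ hn1 k (le_trans hk (Nat.le_succ n)), nu_sum hℓ hn1 (k+1) (Nat.succ_le_succ hk)]
  ring

include hℓ hn1 hn2 in
lemma G_zero_right_small {k : ℕ} (hk : k ≤ n) {x : ℤ} (hx : (2:ℤ)^(k+2) - 2 ≤ x) :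
    G ℓ n k x = 0 := by
  unfold G
  rw [Finset.sum_sub_distrib]
  have hb1 : ((2:ℤ)^(k+1) - 2) ≤ x := by
    have : (2:ℤ)^(k+1) ≤ (2:ℤ)^(k+2) := by apply pow_le_pow_right₀ <;> omega
    omega
  rw [sum_Icc_of_supp (fun a ha => nu_supp_small hn2 (le_trans hk (Nat.le_succ n)) ha) hb1]
  rw [sum_Icc_of_supp (fun a ha => nu_supp_small hn2 (Nat.succ_le_succ hk) ha) hx]
  rw [nu_sum_small hℓ hn1 hn2 (le_trans hk (Nat.le_succ n)),
    nu_sum_small hℓ hn1 hn2 (Nat.succ_le_succ hk)]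
  ring

lemma G_sub (k : ℕ) (x : ℤ) :
    G ℓ n k x - G ℓ n k (x - 1) = nu ℓ n k x - nu ℓ n (k+1) x := by
  rcases lt_or_ge x 0 with hx | hx
  · rw [G_zero_left hx, G_zero_left (by omega), nu_neg hx, nu_neg hx]
  · unfold G
    rw [show Finset.Icc (0:ℤ) x = insert x (Finset.Icc 0 (x-1)) from ?_]
    · rw [Finset.sum_insert (by simp)]
      ring
    · ext c
      simp only [Finset.mem_Icc, Finset.mem_insert]
      omega

end Stage


/-! ### The multi-dimensional flow -/

noncomputable def W (d ℓ n k : ℕ) (j : Fin d) (z : Fin d → ℤ) : ℝ :=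
  ∏ i ∈ Finset.univ.erase j,
    if (i:ℕ) < (j:ℕ) then nu ℓ n (k+1) (z i) else nu ℓ n k (z i)

noncomputable def Fl (d ℓ n : ℕ) (j : Fin d) (z : Fin d → ℤ) : ℝ :=
  ∑ k ∈ Finset.range (n+1), W d ℓ n k j z * G ℓ n k (z j)

section Multi

variable {d ℓ n : ℕ} (hℓ : 1 ≤ ℓ) (hn1 : 2^n ≤ ℓ) (hn2 : ℓ < 2^(n+1))

lemma W_nonneg (k : ℕ) (j : Fin d) (z : Fin d → ℤ) : 0 ≤ W d ℓ n k j z :=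
  Finset.prod_nonneg fun i _ => by split <;> exact nu_nonneg _ _

include hℓ hn1 in
lemma W_le {k : ℕ} (hk : k ≤ n) (j : Fin d) (z : Fin d → ℤ) :
    W d ℓ n k j z ≤ (2 * ((2:ℝ)^k)⁻¹) ^ (d - 1) := by
  have hcard : (Finset.univ.erase j).card = d - 1 := by
    rw [Finset.card_erase_of_mem (Finset.mem_univ j), Finset.card_univ, Fintype.card_fin]
  calc W d ℓ n k j z ≤ ∏ i ∈ Finset.univ.erase j, (2 * ((2:ℝ)^k)⁻¹) := by
        apply Finset.prod_le_prod
        · intro i _; split <;> exact nu_nonneg _ _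
        · intro i _
          split
          · calc nu ℓ n (k+1) (z i) ≤ 2 * ((2:ℝ)^(k+1))⁻¹ :=
                  nu_le hℓ hn1 (by omega) _
              _ ≤ 2 * ((2:ℝ)^k)⁻¹ := by
                  have h1 : (2:ℝ)^k ≤ (2:ℝ)^(k+1) := by
                    apply pow_le_pow_right₀ <;> norm_num
                  have h2 : (0:ℝ) < (2:ℝ)^k := by positivity
                  have := inv_anti₀ h2 h1
                  linarith
          · exact nu_le hℓ hn1 (by omega) _
    _ = (2 * ((2:ℝ)^k)⁻¹) ^ (d - 1) := by rw [Finset.prod_const, hcard]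

lemma W_congr {k : ℕ} {j : Fin d} {z z' : Fin d → ℤ}
    (h : ∀ i, i ≠ j → z i = z' i) : W d ℓ n k j z = W d ℓ n k j z' := by
  apply Finset.prod_congr rfl
  intro i hi
  rw [h i (Finset.ne_of_mem_erase hi)]

include hℓ hn1 in
lemma W_supp_box {k : ℕ} (hk : k ≤ n) {j : Fin d} {z : Fin d → ℤ}
    (h : W d ℓ n k j z ≠ 0) (i : Fin d) (hij : i ≠ j) :
    z i ∈ Finset.Icc (0:ℤ) (2*(ℓ:ℤ) - 2) := by
  rw [W, Finset.prod_ne_zero_iff] at h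
  have := h i (Finset.mem_erase.mpr ⟨hij, Finset.mem_univ i⟩)
  split at this
  · exact nu_supp_box hℓ hn1 (by omega) this
  · exact nu_supp_box hℓ hn1 (by omega) this

include hℓ hn1 hn2 in
lemma W_supp_small {k : ℕ} (hk : k ≤ n) {j : Fin d} {z : Fin d → ℤ}
    (h : W d ℓ n k j z ≠ 0) (i : Fin d) (hij : i ≠ j) :
    z i ∈ Finset.Icc (0:ℤ) ((2:ℤ)^(k+2) - 2) := by
  rw [W, Finset.prod_ne_zero_iff] at h
  have hmem := h i (Finset.mem_erase.mpr ⟨hij, Finset.mem_univ i⟩)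
  have hmono : ((2:ℤ)^(k+1) - 2) ≤ (2:ℤ)^(k+2) - 2 := by
    have : (2:ℤ)^(k+1) ≤ (2:ℤ)^(k+2) := by apply pow_le_pow_right₀ <;> omega
    omega
  split at hmem
  · exact nu_supp_small hn2 (by omega) hmem
  · have := nu_supp_small hn2 (k := k) (by omega) hmem
    simp only [Finset.mem_Icc] at *
    omega

include hℓ hn1 in
lemma Fl_supp {j : Fin d} {z : Fin d → ℤ} (h : Fl d ℓ n j z ≠ 0) :
    (∀ i, 0 ≤ z i ∧ z i ≤ 2*(ℓ:ℤ) - 2) ∧ z j + 1 ≤ 2*(ℓ:ℤ) - 2 := by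
  obtain ⟨k, hk, hne⟩ := Finset.exists_ne_zero_of_sum_ne_zero h
  simp only [Finset.mem_range] at hk
  have hk' : k ≤ n := by omega
  have hW : W d ℓ n k j z ≠ 0 := left_ne_zero_of_mul hne
  have hG : G ℓ n k (z j) ≠ 0 := right_ne_zero_of_mul hne
  have hj1 : 0 ≤ z j := by
    by_contra hc
    exact hG (G_zero_left (by omega))
  have hj2 : z j < 2*(ℓ:ℤ) - 2 := by
    by_contra hc
    exact hG (G_zero_right hℓ hn1 hk' (by omega))
  refine ⟨fun i => ?_, by omega⟩
  rcases eq_or_ne i j with rfl | hij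
  · omega
  · have := W_supp_box hℓ hn1 hk' hW i hij
    simp only [Finset.mem_Icc] at this
    exact this

omit hℓ hn1 in
/-- The divergence identity. -/
lemma div_eq (z : Fin d → ℤ) :
    ∑ j : Fin d, (Fl d ℓ n j z - Fl d ℓ n j (z - eZ d j))
      = (if z = 0 then 1 else 0) - ∏ i, tri ℓ (z i) := by
  have step1 : ∀ j : Fin d, Fl d ℓ n j z - Fl d ℓ n j (z - eZ d j)
      = ∑ k ∈ Finset.range (n+1),
          W d ℓ n k j z * (nu ℓ n k (z j) - nu ℓ n (k+1) (z j)) := by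
    intro j
    unfold Fl
    rw [← Finset.sum_sub_distrib]
    apply Finset.sum_congr rfl
    intro k _
    have hW : W d ℓ n k j (z - eZ d j) = W d ℓ n k j z := by
      apply W_congr
      intro i hij
      simp [eZ, hij]
    have hz : (z - eZ d j) j = z j - 1 := by simp [eZ]
    rw [hW, hz, ← mul_sub, G_sub]
  rw [Finset.sum_congr rfl (fun j _ => step1 j), Finset.sum_comm]
  have step2 : ∀ k, ∑ j : Fin d,
      W d ℓ n k j z * (nu ℓ n k (z j) - nu ℓ n (k+1) (z j))
      = (∏ i, nu ℓ n k (z i)) - (∏ i, nu ℓ n (k+1) (z i)) := by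
    intro k
    set A : ℕ → ℝ := fun m =>
      ∏ i : Fin d, (if (i:ℕ) < m then nu ℓ n (k+1) (z i) else nu ℓ n k (z i)) with hA
    have claim : ∀ j : Fin d,
        W d ℓ n k j z * (nu ℓ n k (z j) - nu ℓ n (k+1) (z j))
          = A (j:ℕ) - A ((j:ℕ)+1) := by
      intro j
      have h1 : A (j:ℕ) = nu ℓ n k (z j) * W d ℓ n k j z := by
        rw [hA]
        simp only
        rw [← Finset.mul_prod_erase Finset.univ _ (Finset.mem_univ j)]
        rw [if_neg (lt_irrefl _)]
        rfl
      have h2 : A ((j:ℕ)+1) = nu ℓ n (k+1) (z j) * W d ℓ n k j z := by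
        rw [hA]
        simp only
        rw [← Finset.mul_prod_erase Finset.univ _ (Finset.mem_univ j)]
        rw [if_pos (by omega)]
        congr 1
        apply Finset.prod_congr rfl
        intro i hi
        have hne : (i:ℕ) ≠ (j:ℕ) := Fin.val_ne_of_ne (Finset.ne_of_mem_erase hi)
        by_cases hlt : (i:ℕ) < (j:ℕ)
        · rw [if_pos hlt, if_pos (by omega)]
        · rw [if_neg hlt, if_neg (by omega)]
      rw [h1, h2]
      ring
    rw [Finset.sum_congr rfl (fun j _ => claim j)]
    rw [Fin.sum_univ_eq_sum_range (fun m => A m - A (m+1)) d]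
    rw [Finset.sum_range_sub' A d]
    have hA0 : A 0 = ∏ i, nu ℓ n k (z i) := by
      rw [hA]; apply Finset.prod_congr rfl
      intro i _; rw [if_neg (by omega)]
    have hAd : A d = ∏ i, nu ℓ n (k+1) (z i) := by
      rw [hA]; apply Finset.prod_congr rfl
      intro i _; rw [if_pos i.isLt]
    rw [hA0, hAd]
  rw [Finset.sum_congr rfl (fun k _ => step2 k)]
  rw [Finset.sum_range_sub' (fun k => ∏ i, nu ℓ n k (z i)) (n+1)]
  congr 1
  · calc ∏ i, nu ℓ n 0 (z i) = ∏ i : Fin d, (if z i = 0 then (1:ℝ) else 0) :=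
        Finset.prod_congr rfl (fun i _ => nu_zero _)
      _ = if z = 0 then 1 else 0 := by
          by_cases h : z = 0
          · rw [if_pos h]
            apply Finset.prod_eq_one
            intro i _
            rw [if_pos (by rw [h]; rfl)]
          · rw [if_neg h]
            obtain ⟨i, hi⟩ : ∃ i, z i ≠ 0 := by
              by_contra hc
              push_neg at hc
              exact h (funext hc)
            exact Finset.prod_eq_zero (Finset.mem_univ i) (if_neg hi)
  · apply Finset.prod_congr rfl
    intro i _
    unfold nu
    rw [if_neg (by omega)]

end Multi


lemma qconv_eq_prod {d ℓ : ℕ} (hℓ : 1 ≤ ℓ) (x : Fin d → ℤ) :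
    qconv d ℓ x = ∏ i, tri ℓ (x i) := by
  have hpunif : ∀ y : Fin d → ℤ, punif d ℓ y = ∏ i, u ℓ (y i) := by
    intro y
    unfold punif
    by_cases h : y ∈ boxZ d ℓ
    · rw [if_pos h]
      unfold boxZ at h
      rw [Fintype.mem_piFinset] at h
      have : ∀ i ∈ Finset.univ, u ℓ (y i) = (ℓ:ℝ)⁻¹ := by
        intro i _
        unfold u
        rw [if_pos (h i)]
      rw [Finset.prod_congr rfl this, Finset.prod_const, Finset.card_univ,
        Fintype.card_fin, inv_pow]
    · rw [if_neg h]
      unfold boxZ at h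
      rw [Fintype.mem_piFinset] at h
      push_neg at h
      obtain ⟨i, hi⟩ := h
      symm
      apply Finset.prod_eq_zero (Finset.mem_univ i)
      unfold u
      rw [if_neg hi]
  unfold qconv
  have hterm : ∀ y : Fin d → ℤ, punif d ℓ y * punif d ℓ (x - y)
      = ∏ i, (u ℓ (y i) * u ℓ (x i - y i)) := by
    intro y
    rw [hpunif y, hpunif (x - y), ← Finset.prod_mul_distrib]
    rfl
  rw [Finset.sum_congr rfl (fun y _ => hterm y)]
  unfold boxZ
  exact (Finset.prod_univ_sum (fun _ : Fin d => Finset.Icc (0:ℤ) ((ℓ:ℤ)-1))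
    (fun i b => u ℓ b * u ℓ (x i - b))).symm

/-! ### The flow as a function of ordered pairs -/

noncomputable def Phi (d ℓ n : ℕ) (x y : Fin d → ℤ) : ℝ :=
  (∑ j : Fin d, if y = x + eZ d j then Fl d ℓ n j x else 0)
  - (∑ j : Fin d, if x = y + eZ d j then Fl d ℓ n j y else 0)

section PhiSec

variable {d ℓ n : ℕ} (hℓ : 1 ≤ ℓ) (hn1 : 2^n ≤ ℓ) (hn2 : ℓ < 2^(n+1))

lemma add_eZ_left_cancel {x : Fin d → ℤ} {i j : Fin d} (h : x + eZ d j = x + eZ d i) :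
    i = j := by
  have h2 : eZ d j = eZ d i := by
    funext m
    have := congrFun h m
    simp only [Pi.add_apply] at this
    omega
  by_contra hne
  have h3 := congrFun h2 i
  rw [show eZ d j i = 0 from by simp [eZ, hne], show eZ d i i = 1 from by simp [eZ]] at h3
  exact absurd h3 (by norm_num)

lemma not_self_add_two {x : Fin d → ℤ} {i j : Fin d} : x ≠ x + eZ d j + eZ d i := by
  intro h
  have h3 := congrFun h j
  simp only [Pi.add_apply] at h3
  have e1 : eZ d j j = 1 := by simp [eZ]
  have e2 : (0:ℤ) ≤ eZ d i j := by unfold eZ; split <;> norm_num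
  rw [e1] at h3
  omega

lemma not_sub_eq_add {x : Fin d → ℤ} {i j : Fin d} : x - eZ d j ≠ x + eZ d i := by
  intro h
  have h3 := congrFun h i
  simp only [Pi.sub_apply, Pi.add_apply] at h3
  have e1 : eZ d i i = 1 := by simp [eZ]
  have e2 : (0:ℤ) ≤ eZ d j i := by unfold eZ; split <;> norm_num
  rw [e1] at h3
  omega

lemma eq_sub_add_iff {x : Fin d → ℤ} {i j : Fin d} : x = x - eZ d j + eZ d i ↔ i = j := by
  constructor
  · intro h
    by_contra hne
    have h3 := congrFun h i
    simp only [Pi.sub_apply, Pi.add_apply] at h3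
    rw [show eZ d i i = 1 from by simp [eZ], show eZ d j i = 0 from by simp [eZ, hne]] at h3
    omega
  · rintro rfl
    simp

lemma Phi_apply_add (x : Fin d → ℤ) (j : Fin d) :
    Phi d ℓ n x (x + eZ d j) = Fl d ℓ n j x := by
  unfold Phi
  have h1 : ∑ i : Fin d, (if x + eZ d j = x + eZ d i then Fl d ℓ n i x else 0)
      = Fl d ℓ n j x := by
    rw [Finset.sum_eq_single j]
    · rw [if_pos rfl]
    · intro i _ hij
      rw [if_neg (fun h => hij (add_eZ_left_cancel h))]
    · intro h; exact absurd (Finset.mem_univ j) h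
  have h2 : ∑ i : Fin d, (if x = x + eZ d j + eZ d i then Fl d ℓ n i (x + eZ d j) else 0)
      = 0 := by
    apply Finset.sum_eq_zero
    intro i _
    rw [if_neg not_self_add_two]
  rw [h1, h2, sub_zero]

lemma Phi_apply_sub (x : Fin d → ℤ) (j : Fin d) :
    Phi d ℓ n x (x - eZ d j) = - Fl d ℓ n j (x - eZ d j) := by
  unfold Phi
  have h1 : ∑ i : Fin d, (if x - eZ d j = x + eZ d i then Fl d ℓ n i x else 0) = 0 := by
    apply Finset.sum_eq_zero
    intro i _
    rw [if_neg not_sub_eq_add]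
  have h2 : ∑ i : Fin d, (if x = x - eZ d j + eZ d i then Fl d ℓ n i (x - eZ d j) else 0)
      = Fl d ℓ n j (x - eZ d j) := by
    rw [Finset.sum_eq_single j]
    · rw [if_pos (eq_sub_add_iff.mpr rfl)]
    · intro i _ hij
      rw [if_neg (fun h => hij (eq_sub_add_iff.mp h))]
    · intro h; exact absurd (Finset.mem_univ j) h
  rw [h1, h2, zero_sub]

include hℓ in
lemma mem_boxZ_iff {x : Fin d → ℤ} :
    x ∈ boxZ d (2*ℓ - 1) ↔ ∀ i, 0 ≤ x i ∧ x i ≤ 2*(ℓ:ℤ) - 2 := by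
  unfold boxZ
  rw [Fintype.mem_piFinset]
  have : ((2*ℓ - 1 : ℕ) : ℤ) - 1 = 2*(ℓ:ℤ) - 2 := by
    have : (1:ℕ) ≤ 2*ℓ := by omega
    push_cast [this]
    ring
  simp only [Finset.mem_Icc, this]

include hℓ hn1 in
lemma Phi_isFlow : IsFlow d (2*ℓ - 1) (Phi d ℓ n)
    (fun x => if x = 0 then 1 else 0) (qconv d ℓ) := by
  refine ⟨?_, ?_, ?_⟩
  · intro x y
    unfold Phi
    ring
  · intro x y hxy
    have : (∑ j : Fin d, if y = x + eZ d j then Fl d ℓ n j x else 0) ≠ 0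
        ∨ (∑ j : Fin d, if x = y + eZ d j then Fl d ℓ n j y else 0) ≠ 0 := by
      by_contra hc
      push_neg at hc
      unfold Phi at hxy
      rw [hc.1, hc.2, sub_zero] at hxy
      exact hxy rfl
    rcases this with h | h
    · obtain ⟨i, _, hne⟩ := Finset.exists_ne_zero_of_sum_ne_zero h
      have hcond : y = x + eZ d i := by
        by_contra hc; rw [if_neg hc] at hne; exact hne rfl
      rw [if_pos hcond] at hne
      obtain ⟨hall, hedge⟩ := Fl_supp hℓ hn1 hne
      refine ⟨(mem_boxZ_iff hℓ).mpr hall, (mem_boxZ_iff hℓ).mpr ?_, ⟨i, Or.inl hcond⟩⟩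
      intro m
      rw [hcond]
      simp only [Pi.add_apply, eZ]
      rcases eq_or_ne m i with rfl | hmi
      · rw [if_pos rfl]
        have := hall m
        omega
      · rw [if_neg hmi]
        have := hall m
        omega
    · obtain ⟨i, _, hne⟩ := Finset.exists_ne_zero_of_sum_ne_zero h
      have hcond : x = y + eZ d i := by
        by_contra hc; rw [if_neg hc] at hne; exact hne rfl
      rw [if_pos hcond] at hne
      obtain ⟨hall, hedge⟩ := Fl_supp hℓ hn1 hne
      refine ⟨(mem_boxZ_iff hℓ).mpr ?_, (mem_boxZ_iff hℓ).mpr hall, ⟨i, Or.inr ?_⟩⟩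
      · intro m
        rw [hcond]
        simp only [Pi.add_apply, eZ]
        rcases eq_or_ne m i with rfl | hmi
        · rw [if_pos rfl]
          have := hall m
          omega
        · rw [if_neg hmi]
          have := hall m
          omega
      · rw [hcond]
        funext m
        simp [eZ]
  · intro x _
    have : ∀ j : Fin d, Phi d ℓ n x (x + eZ d j) + Phi d ℓ n x (x - eZ d j)
        = Fl d ℓ n j x - Fl d ℓ n j (x - eZ d j) := by
      intro j
      rw [Phi_apply_add, Phi_apply_sub]
      ring
    rw [Finset.sum_congr rfl (fun j _ => this j), div_eq, qconv_eq_prod hℓ]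

end PhiSec


/-! ### Cost estimates -/

section Cost

variable {d ℓ n : ℕ} (hℓ : 1 ≤ ℓ) (hn1 : 2^n ≤ ℓ) (hn2 : ℓ < 2^(n+1))

include hℓ hn1 in
lemma sum_shift_le (j : Fin d) :
    ∑ x ∈ boxZ d (2*ℓ-1), (Fl d ℓ n j (x - eZ d j))^2
      ≤ ∑ x ∈ boxZ d (2*ℓ-1), (Fl d ℓ n j x)^2 := by
  have hinj : ∀ a ∈ boxZ d (2*ℓ-1), ∀ b ∈ boxZ d (2*ℓ-1),
      (fun x => x - eZ d j) a = (fun x => x - eZ d j) b → a = b := by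
    intro a _ b _ h
    exact sub_left_injective h
  set s := (boxZ d (2*ℓ-1)).image (fun x => x - eZ d j) with hs
  have himg : ∑ y ∈ s, (Fl d ℓ n j y)^2
      = ∑ x ∈ boxZ d (2*ℓ-1), (Fl d ℓ n j (x - eZ d j))^2 := Finset.sum_image hinj
  rw [← himg]
  have hsub : s ∩ boxZ d (2*ℓ-1) ⊆ s := Finset.inter_subset_left
  have h1 : ∑ y ∈ s, (Fl d ℓ n j y)^2 = ∑ y ∈ s ∩ boxZ d (2*ℓ-1), (Fl d ℓ n j y)^2 := by
    symm
    apply Finset.sum_subset hsub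
    intro y hy hny
    have hnotbox : y ∉ boxZ d (2*ℓ-1) := by
      intro hb
      exact hny (Finset.mem_inter.mpr ⟨hy, hb⟩)
    by_contra hc
    have hFl : Fl d ℓ n j y ≠ 0 := by
      intro h0
      exact hc (by rw [h0]; ring)
    exact hnotbox ((mem_boxZ_iff hℓ).mpr (Fl_supp hℓ hn1 hFl).1)
  rw [h1]
  apply Finset.sum_le_sum_of_subset_of_nonneg Finset.inter_subset_right
  intro y _ _
  positivity

include hℓ hn1 in
lemma flowCost_le :
    flowCost d (2*ℓ-1) (Phi d ℓ n)
      ≤ ∑ j : Fin d, ∑ x ∈ boxZ d (2*ℓ-1), (Fl d ℓ n j x)^2 := by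
  unfold flowCost
  have hterm : ∀ x ∈ boxZ d (2*ℓ-1), ∑ j : Fin d,
      ((Phi d ℓ n x (x + eZ d j))^2 + (Phi d ℓ n x (x - eZ d j))^2)
      = ∑ j : Fin d, ((Fl d ℓ n j x)^2 + (Fl d ℓ n j (x - eZ d j))^2) := by
    intro x _
    apply Finset.sum_congr rfl
    intro j _
    rw [Phi_apply_add, Phi_apply_sub]
    ring
  rw [Finset.sum_congr rfl hterm]
  rw [Finset.sum_comm]
  have : ∀ j : Fin d, ∑ x ∈ boxZ d (2*ℓ-1),
      ((Fl d ℓ n j x)^2 + (Fl d ℓ n j (x - eZ d j))^2)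
      ≤ 2 * ∑ x ∈ boxZ d (2*ℓ-1), (Fl d ℓ n j x)^2 := by
    intro j
    rw [Finset.sum_add_distrib]
    have := sum_shift_le hℓ hn1 (n := n) j
    linarith
  calc (1/2) * ∑ j : Fin d, ∑ x ∈ boxZ d (2*ℓ-1),
        ((Fl d ℓ n j x)^2 + (Fl d ℓ n j (x - eZ d j))^2)
      ≤ (1/2) * ∑ j : Fin d, 2 * ∑ x ∈ boxZ d (2*ℓ-1), (Fl d ℓ n j x)^2 := by
        apply mul_le_mul_of_nonneg_left _ (by norm_num)
        exact Finset.sum_le_sum fun j _ => this j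
    _ = ∑ j : Fin d, ∑ x ∈ boxZ d (2*ℓ-1), (Fl d ℓ n j x)^2 := by
        rw [← Finset.mul_sum]
        ring

include hℓ hn1 in
lemma Fl_sq_le_one_d1 (hd1 : d = 1) (j : Fin d) (z : Fin d → ℤ) :
    (Fl d ℓ n j z)^2 ≤ 1 := by
  have hW : ∀ k, W d ℓ n k j z = 1 := by
    intro k
    unfold W
    have : Finset.univ.erase j = (∅ : Finset (Fin d)) := by
      apply Finset.eq_empty_of_forall_notMem
      intro i hi
      have h1 := Finset.ne_of_mem_erase hi
      have : i = j := by
        subst hd1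
        exact Subsingleton.elim i j
      exact h1 this
    rw [this, Finset.prod_empty]
  have hFl : Fl d ℓ n j z = ∑ a ∈ Finset.Icc (0:ℤ) (z j),
      (nu ℓ n 0 a - nu ℓ n (n+1) a) := by
    unfold Fl
    rw [Finset.sum_congr rfl (fun k _ => by rw [hW k, one_mul])]
    unfold G
    rw [Finset.sum_comm]
    apply Finset.sum_congr rfl
    intro a _
    exact Finset.sum_range_sub' (fun k => nu ℓ n k a) (n+1)
  have habs : |Fl d ℓ n j z| ≤ 1 := by
    rw [hFl, Finset.sum_sub_distrib]
    have h1 := nu_cdf_le_one hℓ hn1 (k := 0) (by omega) (z j)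
    have h2 := nu_cdf_le_one hℓ hn1 (k := n+1) (le_refl _) (z j)
    have h3 : (0:ℝ) ≤ ∑ a ∈ Finset.Icc (0:ℤ) (z j), nu ℓ n 0 a :=
      Finset.sum_nonneg fun a _ => nu_nonneg _ _
    have h4 : (0:ℝ) ≤ ∑ a ∈ Finset.Icc (0:ℤ) (z j), nu ℓ n (n+1) a :=
      Finset.sum_nonneg fun a _ => nu_nonneg _ _
    rw [abs_le]
    constructor <;> linarith
  calc (Fl d ℓ n j z)^2 = |Fl d ℓ n j z|^2 := (sq_abs _).symm
    _ ≤ 1^2 := by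
        apply pow_le_pow_left₀ (abs_nonneg _) habs
    _ = 1 := one_pow 2

lemma card_boxZ (M : ℕ) : (boxZ d M).card = M^d := by
  unfold boxZ
  rw [Fintype.card_piFinset]
  have : ∀ i : Fin d, (Finset.Icc (0:ℤ) ((M:ℤ)-1)).card = M := by
    intro i
    rw [Int.card_Icc]
    omega
  rw [Finset.prod_congr rfl (fun i _ => this i), Finset.prod_const, Finset.card_univ,
    Fintype.card_fin]

end Cost


section Pair

variable {d ℓ n : ℕ} (hℓ : 1 ≤ ℓ) (hn1 : 2^n ≤ ℓ) (hn2 : ℓ < 2^(n+1))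

/-- The bound for the interaction of stages `k ≤ k'`. -/
noncomputable def Pb (d k k' : ℕ) : ℝ :=
  ((2:ℝ)^(k+2))^d * ((2 * ((2:ℝ)^k)⁻¹)^(d-1) * (2 * ((2:ℝ)^k')⁻¹)^(d-1))

lemma Pb_nonneg (d k k' : ℕ) : 0 ≤ Pb d k k' := by unfold Pb; positivity

include hℓ hn1 hn2 in
lemma pair_sum_le (j : Fin d) {k k' : ℕ} (hk : k ≤ n) (hk' : k' ≤ n) (hkk : k ≤ k') :
    ∑ x ∈ boxZ d (2*ℓ-1),
        |W d ℓ n k j x * G ℓ n k (x j)| * |W d ℓ n k' j x * G ℓ n k' (x j)|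
      ≤ Pb d k k' := by
  set B : ℝ := (2 * ((2:ℝ)^k)⁻¹)^(d-1) * (2 * ((2:ℝ)^k')⁻¹)^(d-1) with hB
  have hBnn : 0 ≤ B := by positivity
  have hpt : ∀ x ∈ boxZ d (2*ℓ-1),
      |W d ℓ n k j x * G ℓ n k (x j)| * |W d ℓ n k' j x * G ℓ n k' (x j)|
        ≤ if x ∈ boxZ d (2^(k+2)-1) then B else 0 := by
    intro x _
    by_cases hx : x ∈ boxZ d (2^(k+2)-1)
    · rw [if_pos hx]
      have hb1 : |W d ℓ n k j x * G ℓ n k (x j)| ≤ (2 * ((2:ℝ)^k)⁻¹)^(d-1) := by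
        rw [abs_mul]
        calc |W d ℓ n k j x| * |G ℓ n k (x j)|
            ≤ (2 * ((2:ℝ)^k)⁻¹)^(d-1) * 1 := by
              apply mul_le_mul _ (G_abs_le hℓ hn1 hk _) (abs_nonneg _) (by positivity)
              rw [abs_of_nonneg (W_nonneg _ _ _)]
              exact W_le hℓ hn1 hk j x
          _ = (2 * ((2:ℝ)^k)⁻¹)^(d-1) := mul_one _
      have hb2 : |W d ℓ n k' j x * G ℓ n k' (x j)| ≤ (2 * ((2:ℝ)^k')⁻¹)^(d-1) := by
        rw [abs_mul]
        calc |W d ℓ n k' j x| * |G ℓ n k' (x j)|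
            ≤ (2 * ((2:ℝ)^k')⁻¹)^(d-1) * 1 := by
              apply mul_le_mul _ (G_abs_le hℓ hn1 hk' _) (abs_nonneg _) (by positivity)
              rw [abs_of_nonneg (W_nonneg _ _ _)]
              exact W_le hℓ hn1 hk' j x
          _ = (2 * ((2:ℝ)^k')⁻¹)^(d-1) := mul_one _
      exact mul_le_mul hb1 hb2 (abs_nonneg _) (by positivity)
    · rw [if_neg hx]
      have hzero : W d ℓ n k j x * G ℓ n k (x j) = 0 := by
        unfold boxZ at hx
        rw [Fintype.mem_piFinset] at hx
        push_neg at hx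
        obtain ⟨i, hi⟩ := hx
        have hcast : ((2^(k+2) - 1 : ℕ) : ℤ) - 1 = (2:ℤ)^(k+2) - 2 := by
          have h1 : (1:ℕ) ≤ 2^(k+2) := Nat.one_le_two_pow
          push_cast [h1]
          ring
        rw [hcast] at hi
        simp only [Finset.mem_Icc] at hi
        push_neg at hi
        rcases eq_or_ne i j with rfl | hij
        · have : G ℓ n k (x i) = 0 := by
            rcases lt_or_ge (x i) 0 with hneg | hpos
            · exact G_zero_left hneg
            · exact G_zero_right_small hℓ hn1 hn2 hk (by have := hi hpos; omega)
          rw [this, mul_zero]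
        · have : W d ℓ n k j x = 0 := by
            by_contra hW
            have := W_supp_small hℓ hn1 hn2 hk hW i hij
            simp only [Finset.mem_Icc] at this
            have := hi this.1
            omega
          rw [this, zero_mul]
      rw [hzero, abs_zero, zero_mul]
  calc ∑ x ∈ boxZ d (2*ℓ-1),
        |W d ℓ n k j x * G ℓ n k (x j)| * |W d ℓ n k' j x * G ℓ n k' (x j)|
      ≤ ∑ x ∈ boxZ d (2*ℓ-1), (if x ∈ boxZ d (2^(k+2)-1) then B else 0) :=
        Finset.sum_le_sum hpt
    _ = ∑ x ∈ boxZ d (2*ℓ-1) ∩ boxZ d (2^(k+2)-1), B := by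
        rw [Finset.sum_ite_mem]
    _ = ((boxZ d (2*ℓ-1) ∩ boxZ d (2^(k+2)-1)).card : ℝ) * B := by
        rw [Finset.sum_const, nsmul_eq_mul]
    _ ≤ ((2:ℝ)^(k+2))^d * B := by
        apply mul_le_mul_of_nonneg_right _ hBnn
        have h1 : (boxZ d (2*ℓ-1) ∩ boxZ d (2^(k+2)-1)).card
            ≤ (boxZ d (2^(k+2)-1)).card :=
          Finset.card_le_card Finset.inter_subset_right
        calc ((boxZ d (2*ℓ-1) ∩ boxZ d (2^(k+2)-1)).card : ℝ)
            ≤ (((2^(k+2)-1 : ℕ))^d : ℝ) := by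
              exact_mod_cast le_trans h1 (le_of_eq (card_boxZ _))
          _ ≤ ((2:ℝ)^(k+2))^d := by
              apply pow_le_pow_left₀ (by positivity)
              calc (((2^(k+2)-1 : ℕ)) : ℝ) ≤ ((2^(k+2) : ℕ) : ℝ) := by
                    exact_mod_cast Nat.sub_le _ _
                _ = (2:ℝ)^(k+2) := by push_cast; ring
    _ = Pb d k k' := by rw [hB]; unfold Pb; ring

end Pair


section SqSum

variable {d ℓ n : ℕ} (hℓ : 1 ≤ ℓ) (hn1 : 2^n ≤ ℓ) (hn2 : ℓ < 2^(n+1))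

lemma tri_sum_eq {N k' : ℕ} (hk' : k' < N) (f : ℕ → ℝ) :
    ∑ k ∈ Finset.range N, (if k ≤ k' then f k else 0)
      = ∑ k ∈ Finset.range (k'+1), f k := by
  have hsub : Finset.range (k'+1) ⊆ Finset.range N := by
    intro a ha
    simp only [Finset.mem_range] at *
    omega
  rw [← Finset.sum_subset hsub (fun k hk hnk => ?_)]
  · apply Finset.sum_congr rfl
    intro k hk
    simp only [Finset.mem_range] at hk
    rw [if_pos (by omega)]
  · simp only [Finset.mem_range] at hk hnk
    rw [if_neg (by omega)]

include hℓ hn1 hn2 in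
lemma sq_sum_le (j : Fin d) :
    ∑ x ∈ boxZ d (2*ℓ-1), (Fl d ℓ n j x)^2
      ≤ 2 * ∑ k' ∈ Finset.range (n+1), ∑ k ∈ Finset.range (k'+1), Pb d k k' := by
  have expand : ∀ x : Fin d → ℤ, (Fl d ℓ n j x)^2
      = ∑ k ∈ Finset.range (n+1), ∑ k' ∈ Finset.range (n+1),
          (W d ℓ n k j x * G ℓ n k (x j)) * (W d ℓ n k' j x * G ℓ n k' (x j)) := by
    intro x
    rw [sq]
    unfold Fl
    rw [Finset.sum_mul_sum]
  calc ∑ x ∈ boxZ d (2*ℓ-1), (Fl d ℓ n j x)^2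
      = ∑ k ∈ Finset.range (n+1), ∑ x ∈ boxZ d (2*ℓ-1), ∑ k' ∈ Finset.range (n+1),
          (W d ℓ n k j x * G ℓ n k (x j)) * (W d ℓ n k' j x * G ℓ n k' (x j)) := by
        rw [← Finset.sum_comm]
        exact Finset.sum_congr rfl fun x _ => expand x
    _ = ∑ k ∈ Finset.range (n+1), ∑ k' ∈ Finset.range (n+1), ∑ x ∈ boxZ d (2*ℓ-1),
          (W d ℓ n k j x * G ℓ n k (x j)) * (W d ℓ n k' j x * G ℓ n k' (x j)) :=
        Finset.sum_congr rfl fun k _ => Finset.sum_comm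
    _ ≤ ∑ k ∈ Finset.range (n+1), ∑ k' ∈ Finset.range (n+1),
          ((if k ≤ k' then Pb d k k' else 0) + (if k' ≤ k then Pb d k' k else 0)) := by
        apply Finset.sum_le_sum
        intro k hk
        apply Finset.sum_le_sum
        intro k' hk'
        simp only [Finset.mem_range] at hk hk'
        have habs : ∑ x ∈ boxZ d (2*ℓ-1),
            (W d ℓ n k j x * G ℓ n k (x j)) * (W d ℓ n k' j x * G ℓ n k' (x j))
            ≤ ∑ x ∈ boxZ d (2*ℓ-1),
              |W d ℓ n k j x * G ℓ n k (x j)| * |W d ℓ n k' j x * G ℓ n k' (x j)| := by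
          apply Finset.sum_le_sum
          intro x _
          rw [← abs_mul]
          exact le_abs_self _
        rcases le_total k k' with h | h
        · calc _ ≤ _ := habs
            _ ≤ Pb d k k' := pair_sum_le hℓ hn1 hn2 j (by omega) (by omega) h
            _ ≤ _ := by
                rw [if_pos h]
                have : (0:ℝ) ≤ if k' ≤ k then Pb d k' k else 0 := by
                  split
                  · exact Pb_nonneg _ _ _
                  · exact le_rfl
                linarith
        · calc _ ≤ _ := habs
            _ = ∑ x ∈ boxZ d (2*ℓ-1),
                |W d ℓ n k' j x * G ℓ n k' (x j)| * |W d ℓ n k j x * G ℓ n k (x j)| :=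
              Finset.sum_congr rfl fun x _ => mul_comm _ _
            _ ≤ Pb d k' k := pair_sum_le hℓ hn1 hn2 j (by omega) (by omega) h
            _ ≤ _ := by
                rw [if_pos h]
                have : (0:ℝ) ≤ if k ≤ k' then Pb d k k' else 0 := by
                  split
                  · exact Pb_nonneg _ _ _
                  · exact le_rfl
                linarith
    _ = 2 * ∑ k' ∈ Finset.range (n+1), ∑ k ∈ Finset.range (k'+1), Pb d k k' := by
        rw [show (∑ k ∈ Finset.range (n+1), ∑ k' ∈ Finset.range (n+1),
            ((if k ≤ k' then Pb d k k' else 0) + (if k' ≤ k then Pb d k' k else 0)))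
          = (∑ k ∈ Finset.range (n+1), ∑ k' ∈ Finset.range (n+1),
              (if k ≤ k' then Pb d k k' else 0))
            + (∑ k ∈ Finset.range (n+1), ∑ k' ∈ Finset.range (n+1),
              (if k' ≤ k then Pb d k' k else 0)) from by
          rw [← Finset.sum_add_distrib]
          exact Finset.sum_congr rfl fun k _ => Finset.sum_add_distrib]
        have hfirst : ∑ k ∈ Finset.range (n+1), ∑ k' ∈ Finset.range (n+1),
            (if k ≤ k' then Pb d k k' else 0)
            = ∑ k' ∈ Finset.range (n+1), ∑ k ∈ Finset.range (k'+1), Pb d k k' := by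
          rw [Finset.sum_comm]
          apply Finset.sum_congr rfl
          intro k' hk'
          simp only [Finset.mem_range] at hk'
          exact tri_sum_eq hk' _
        have hsecond : ∑ k ∈ Finset.range (n+1), ∑ k' ∈ Finset.range (n+1),
            (if k' ≤ k then Pb d k' k else 0)
            = ∑ k' ∈ Finset.range (n+1), ∑ k ∈ Finset.range (k'+1), Pb d k k' := by
          apply Finset.sum_congr rfl
          intro k hk
          simp only [Finset.mem_range] at hk
          exact tri_sum_eq hk _
        rw [hfirst, hsecond]
        ring

lemma sum_pow_two_le (m : ℕ) : ∑ k ∈ Finset.range m, (2:ℝ)^k ≤ 2^m := by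
  rw [geom_sum_eq (by norm_num : (2:ℝ) ≠ 1)]
  have : (0:ℝ) < 2^m := by positivity
  norm_num

lemma sum_inv_pow_two_le (m : ℕ) : ∑ k ∈ Finset.range m, ((2:ℝ)^k)⁻¹ ≤ 2 := by
  have h : ∀ k ∈ Finset.range m, ((2:ℝ)^k)⁻¹ = (2⁻¹:ℝ)^k := by
    intro k _
    rw [inv_pow]
  rw [Finset.sum_congr rfl h, geom_sum_eq (by norm_num : (2⁻¹:ℝ) ≠ 1)]
  have h1 : (0:ℝ) ≤ (2⁻¹:ℝ)^m := by positivity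
  rw [div_le_iff_of_neg (by norm_num : (2⁻¹:ℝ) - 1 < 0)]
  linarith

lemma T_bound_d2 (hd : d = 2) :
    ∑ k' ∈ Finset.range (n+1), ∑ k ∈ Finset.range (k'+1), Pb d k k'
      ≤ 2^7 * (n+1) := by
  subst hd
  have hinner : ∀ k' : ℕ, ∑ k ∈ Finset.range (k'+1), Pb 2 k k' ≤ 2^7 := by
    intro k'
    have hPb : ∀ k, Pb 2 k k' = (2^6 * ((2:ℝ)^k')⁻¹) * (2:ℝ)^k := by
      intro k
      unfold Pb
      have h1 : (0:ℝ) < 2^k := by positivity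
      have h2 : (0:ℝ) < 2^k' := by positivity
      norm_num [pow_add, ← pow_mul]
      field_simp
      ring
    rw [Finset.sum_congr rfl (fun k _ => hPb k), ← Finset.mul_sum]
    calc (2^6 * ((2:ℝ)^k')⁻¹) * ∑ k ∈ Finset.range (k'+1), (2:ℝ)^k
        ≤ (2^6 * ((2:ℝ)^k')⁻¹) * 2^(k'+1) := by
          apply mul_le_mul_of_nonneg_left (sum_pow_two_le _) (by positivity)
      _ = 2^7 := by
          have h2 : (0:ℝ) < 2^k' := by positivity
          field_simp
          ring
  calc ∑ k' ∈ Finset.range (n+1), ∑ k ∈ Finset.range (k'+1), Pb 2 k k'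
      ≤ ∑ k' ∈ Finset.range (n+1), (2^7:ℝ) :=
        Finset.sum_le_sum fun k' _ => hinner k'
    _ = 2^7 * (n+1) := by
        rw [Finset.sum_const, Finset.card_range, nsmul_eq_mul]
        push_cast
        ring

lemma T_bound_d3 (hd : 3 ≤ d) :
    ∑ k' ∈ Finset.range (n+1), ∑ k ∈ Finset.range (k'+1), Pb d k k'
      ≤ 2^(4*d) := by
  have hPb : ∀ k k' : ℕ, k ≤ k' → Pb d k k'
      ≤ (2^(4*d-2) * ((2:ℝ)^(2*k'))⁻¹) * (2:ℝ)^k := by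
    intro k k' hkk
    have hEq : Pb d k k'
        = (2:ℝ)^((k+2)*d + (d-1) + (d-1)) * ((2:ℝ)^(k*(d-1)))⁻¹ * ((2:ℝ)^(k'*(d-1)))⁻¹ := by
      unfold Pb
      rw [mul_pow, mul_pow, ← pow_mul, inv_pow, ← pow_mul, inv_pow, ← pow_mul,
        pow_add, pow_add]
      ring
    rw [hEq]
    have hA : (k+2)*d + (d-1) + (d-1) = (k + (4*d-2)) + k*(d-1) := by
      cases d with
      | zero => omega
      | succ d' =>
          have h1 : d' + 1 - 1 = d' := by omega
          have h2 : 4*(d'+1) - 2 = 4*d' + 2 := by omega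
          rw [h1, h2]
          ring
    have hexp : (2:ℝ)^((k+2)*d + (d-1) + (d-1)) * ((2:ℝ)^(k*(d-1)))⁻¹
        = (2:ℝ)^(k + (4*d-2)) := by
      rw [hA, pow_add]
      have hpos : (2:ℝ)^(k*(d-1)) ≠ 0 := by positivity
      field_simp
    rw [hexp]
    have hmono : ((2:ℝ)^(k'*(d-1)))⁻¹ ≤ ((2:ℝ)^(2*k'))⁻¹ := by
      apply inv_anti₀ (by positivity)
      apply pow_le_pow_right₀ (by norm_num)
      have h := Nat.mul_le_mul_left k' (show 2 ≤ d-1 by omega)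
      omega
    calc (2:ℝ)^(k + (4*d-2)) * ((2:ℝ)^(k'*(d-1)))⁻¹
        ≤ (2:ℝ)^(k + (4*d-2)) * ((2:ℝ)^(2*k'))⁻¹ := by
          apply mul_le_mul_of_nonneg_left hmono (by positivity)
      _ = (2^(4*d-2) * ((2:ℝ)^(2*k'))⁻¹) * (2:ℝ)^k := by
          rw [pow_add]
          ring
  have hinner : ∀ k' : ℕ, ∑ k ∈ Finset.range (k'+1), Pb d k k'
      ≤ 2^(4*d-1) * ((2:ℝ)^k')⁻¹ := by
    intro k'
    calc ∑ k ∈ Finset.range (k'+1), Pb d k k'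
        ≤ ∑ k ∈ Finset.range (k'+1), (2^(4*d-2) * ((2:ℝ)^(2*k'))⁻¹) * (2:ℝ)^k := by
          apply Finset.sum_le_sum
          intro k hk
          simp only [Finset.mem_range] at hk
          exact hPb k k' (by omega)
      _ = (2^(4*d-2) * ((2:ℝ)^(2*k'))⁻¹) * ∑ k ∈ Finset.range (k'+1), (2:ℝ)^k := by
          rw [Finset.mul_sum]
      _ ≤ (2^(4*d-2) * ((2:ℝ)^(2*k'))⁻¹) * 2^(k'+1) := by
          apply mul_le_mul_of_nonneg_left (sum_pow_two_le _) (by positivity)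
      _ = 2^(4*d-1) * ((2:ℝ)^k')⁻¹ := by
          have h1 : (0:ℝ) < 2^k' := by positivity
          have h2 : (2:ℝ)^(2*k') = 2^k' * 2^k' := by
            rw [two_mul, pow_add]
          have h3 : (2:ℝ)^(4*d-1) = 2 * 2^(4*d-2) := by
            rw [← pow_succ']
            congr 1
            omega
          rw [h2, h3, pow_succ]
          field_simp
  calc ∑ k' ∈ Finset.range (n+1), ∑ k ∈ Finset.range (k'+1), Pb d k k'
      ≤ ∑ k' ∈ Finset.range (n+1), 2^(4*d-1) * ((2:ℝ)^k')⁻¹ :=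
        Finset.sum_le_sum fun k' _ => hinner k'
    _ = 2^(4*d-1) * ∑ k' ∈ Finset.range (n+1), ((2:ℝ)^k')⁻¹ := by
        rw [Finset.mul_sum]
    _ ≤ 2^(4*d-1) * 2 := by
        apply mul_le_mul_of_nonneg_left (sum_inv_pow_two_le _) (by positivity)
    _ = 2^(4*d) := by
        rw [← pow_succ]
        congr 1
        omega

end SqSum


section LOne

variable {d : ℕ}

lemma tri_one (a : ℤ) : tri 1 a = u 1 a := by
  unfold tri
  norm_num
  have h0 : u 1 0 = 1 := by norm_num [u]
  rw [h0, one_mul]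

lemma Fl_zero_l1 (j : Fin d) (z : Fin d → ℤ) : Fl d 1 0 j z = 0 := by
  unfold Fl
  rw [Finset.sum_range_one]
  have hG : G 1 0 0 (z j) = 0 := by
    unfold G
    apply Finset.sum_eq_zero
    intro a _
    have h1 : nu 1 0 0 a = u 1 a := by unfold nu; norm_num
    have h2 : nu 1 0 1 a = tri 1 a := by unfold nu; norm_num
    rw [h1, h2, tri_one]
    ring
  rw [hG, mul_zero]

lemma Phi_zero_l1 (x y : Fin d → ℤ) : Phi d 1 0 x y = 0 := by
  unfold Phi
  rw [Finset.sum_eq_zero fun j _ => by rw [Fl_zero_l1]; exact ite_self 0,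
    Finset.sum_eq_zero fun j _ => by rw [Fl_zero_l1]; exact ite_self 0, sub_zero]

end LOne

end FlowAux

/-- Lemma 3.2 (Flow lemma): there is a constant `C_d > 0` such that for every `ℓ` there is a
flow `Φ^ℓ` on `Λ_{2ℓ-1}` connecting the Dirac measure `δ₀` and `q_ℓ = p_ℓ * p_ℓ` with cost
`‖Φ^ℓ‖² ≤ C_d g_d(ℓ)`. -/
theorem flow_lemma (d : ℕ) (hd : 1 ≤ d) :
    ∃ C : ℝ, 0 < C ∧ ∀ ℓ : ℕ, 1 ≤ ℓ →
      ∃ Φ : (Fin d → ℤ) → (Fin d → ℤ) → ℝ,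
        IsFlow d (2 * ℓ - 1) Φ (fun x => if x = 0 then 1 else 0) (qconv d ℓ) ∧
        flowCost d (2 * ℓ - 1) Φ ≤ C * gScale d ℓ := by
  refine ⟨(2:ℝ)^(5*d+11), by positivity, ?_⟩
  intro ℓ hℓ
  set n := Nat.log 2 ℓ with hn
  have hn1 : 2^n ≤ ℓ := Nat.pow_log_le_self 2 (by omega)
  have hn2 : ℓ < 2^(n+1) := Nat.lt_pow_succ_log_self (by norm_num) ℓ
  refine ⟨FlowAux.Phi d ℓ n, FlowAux.Phi_isFlow hℓ hn1, ?_⟩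
  have hcost := FlowAux.flowCost_le (d := d) (n := n) hℓ hn1
  rcases (show d = 1 ∨ d = 2 ∨ 3 ≤ d by omega) with hd1 | hd2 | hd3
  · -- d = 1
    subst hd1
    have hg : gScale 1 ℓ = (ℓ:ℝ) := by unfold gScale; norm_num
    rw [hg]
    calc flowCost 1 (2*ℓ-1) (FlowAux.Phi 1 ℓ n)
        ≤ ∑ j : Fin 1, ∑ x ∈ boxZ 1 (2*ℓ-1), (FlowAux.Fl 1 ℓ n j x)^2 := hcost
      _ ≤ ∑ j : Fin 1, ∑ x ∈ boxZ 1 (2*ℓ-1), (1:ℝ) := by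
          apply Finset.sum_le_sum
          intro j _
          apply Finset.sum_le_sum
          intro x _
          exact FlowAux.Fl_sq_le_one_d1 hℓ hn1 rfl j x
      _ = ((2*ℓ-1 : ℕ) : ℝ) := by
          rw [show ∑ x ∈ boxZ 1 (2*ℓ-1), (1:ℝ) = ((2*ℓ-1:ℕ):ℝ) from by
            rw [Finset.sum_const, FlowAux.card_boxZ]; simp [pow_one]]
          simp
      _ ≤ (2:ℝ)^(5*1+11) * (ℓ:ℝ) := by
          have h1 : ((2*ℓ-1 : ℕ) : ℝ) ≤ 2 * (ℓ:ℝ) := by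
            push_cast [Nat.cast_sub (by omega : 1 ≤ 2*ℓ)]
            norm_num
          have h2 : (0:ℝ) ≤ (ℓ:ℝ) := by positivity
          have h8 : ((2:ℝ))^(5*1+11) = 65536 := by norm_num
          rw [h8]
          nlinarith
  · -- d = 2
    subst hd2
    have hg : gScale 2 ℓ = Real.log ℓ := by unfold gScale; norm_num
    rw [hg]
    rcases eq_or_lt_of_le hℓ with hℓ1 | hℓ2
    · -- ℓ = 1
      have hℓ1' : ℓ = 1 := hℓ1.symm
      subst hℓ1'
      have hn0 : n = 0 := by rw [hn, Nat.log_one_right]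
      rw [hn0]
      have hzero : flowCost 2 (2*1-1) (FlowAux.Phi 2 1 0) = 0 := by
        unfold flowCost
        rw [Finset.sum_eq_zero]
        · ring
        · intro x _
          apply Finset.sum_eq_zero
          intro j _
          rw [FlowAux.Phi_zero_l1, FlowAux.Phi_zero_l1]
          ring
      rw [hzero]
      simp [Real.log_one]
    · -- 2 ≤ ℓ
      have hℓ2' : 2 ≤ ℓ := hℓ2
      have hnpos : 1 ≤ n := by
        rw [hn]
        exact Nat.log_pos (by norm_num) hℓ2'
      have hT := FlowAux.T_bound_d2 (n := n) (d := 2) rfl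
      calc flowCost 2 (2*ℓ-1) (FlowAux.Phi 2 ℓ n)
          ≤ ∑ j : Fin 2, ∑ x ∈ boxZ 2 (2*ℓ-1), (FlowAux.Fl 2 ℓ n j x)^2 := hcost
        _ ≤ ∑ j : Fin 2, 2 * ∑ k' ∈ Finset.range (n+1), ∑ k ∈ Finset.range (k'+1),
              FlowAux.Pb 2 k k' :=
            Finset.sum_le_sum fun j _ => FlowAux.sq_sum_le hℓ hn1 hn2 j
        _ = 2 * (2 * ∑ k' ∈ Finset.range (n+1), ∑ k ∈ Finset.range (k'+1),
              FlowAux.Pb 2 k k') := by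
            rw [Finset.sum_const, Finset.card_univ, Fintype.card_fin, nsmul_eq_mul]
            push_cast
            ring
        _ ≤ 2 * (2 * (2^7 * ((n:ℝ)+1))) := by
            have := hT
            push_cast at this ⊢
            linarith
        _ ≤ (2:ℝ)^(5*2+11) * Real.log ℓ := by
            have hnl : (n:ℝ) * Real.log 2 ≤ Real.log ℓ := by
              rw [← Real.log_pow]
              apply Real.log_le_log (by positivity)
              exact_mod_cast hn1
            have hlog2 : (0.5:ℝ) ≤ Real.log 2 := by
              have := Real.log_two_gt_d9
              linarith
            have h5 : (n:ℝ) * 0.5 ≤ (n:ℝ) * Real.log 2 :=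
              mul_le_mul_of_nonneg_left hlog2 (by positivity)
            have h6 : (1:ℝ) ≤ (n:ℝ) := by exact_mod_cast hnpos
            have h7 : (0:ℝ) ≤ Real.log ℓ := Real.log_nonneg (by exact_mod_cast hℓ)
            have hpow : ((2:ℝ))^(5*2+11) = 2097152 := by norm_num
            rw [hpow]
            nlinarith
  · -- 3 ≤ d
    have hg : gScale d ℓ = 1 := by unfold gScale; rw [if_neg (by omega), if_neg (by omega)]
    rw [hg, mul_one]
    have hT := FlowAux.T_bound_d3 (n := n) hd3
    calc flowCost d (2*ℓ-1) (FlowAux.Phi d ℓ n)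
        ≤ ∑ j : Fin d, ∑ x ∈ boxZ d (2*ℓ-1), (FlowAux.Fl d ℓ n j x)^2 := hcost
      _ ≤ ∑ j : Fin d, 2 * ∑ k' ∈ Finset.range (n+1), ∑ k ∈ Finset.range (k'+1),
            FlowAux.Pb d k k' :=
          Finset.sum_le_sum fun j _ => FlowAux.sq_sum_le hℓ hn1 hn2 j
      _ = (d:ℝ) * (2 * ∑ k' ∈ Finset.range (n+1), ∑ k ∈ Finset.range (k'+1),
            FlowAux.Pb d k k') := by
          rw [Finset.sum_const, Finset.card_univ, Fintype.card_fin, nsmul_eq_mul]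
      _ ≤ (d:ℝ) * (2 * 2^(4*d)) := by
          apply mul_le_mul_of_nonneg_left _ (by positivity)
          linarith
      _ ≤ (2:ℝ)^(5*d+11) := by
          have hd2 : (d:ℝ) ≤ 2^d := by
            exact_mod_cast (Nat.lt_two_pow_self (n := d)).le
          calc (d:ℝ) * (2 * 2^(4*d)) ≤ (2:ℝ)^d * (2 * 2^(4*d)) := by
                apply mul_le_mul_of_nonneg_right hd2 (by positivity)
            _ = (2:ℝ)^(5*d+1) := by
                rw [show (2:ℝ)^d * (2 * 2^(4*d)) = 2 * ((2:ℝ)^d * 2^(4*d)) from by ring,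
                  ← pow_add, ← pow_succ']
                congr 1
                omega
            _ ≤ (2:ℝ)^(5*d+11) := by
                apply pow_le_pow_right₀ (by norm_num)
                omega
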